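/- Let M be a real symmetric p×p matrix of rank r whose smallest nonzero singular value equals σ, and let Δ be a real symmetric p×p matrix with ‖Δ‖₂ ≤ σ/8 such that M+Δ also has rank r. Then ρ(T(M+Δ), T(M)) ≤ (2/σ)·‖Δ‖₂. -/

import Mathlib

open Matrix MeasureTheory
open scoped Classical

noncomputable section

namespace LVGGM

variable {p h : ℕ}

/-- Spectral norm (largest singular value) of a real square matrix. -/
def specNorm (M : Matrix (Fin p) (Fin p) ℝ) : ℝ :=
  ‖Matrix.toEuclideanCLM (𝕜 := ℝ) M‖

/-- Entrywise max norm `‖M‖_∞`. -/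
def maxNorm (M : Matrix (Fin p) (Fin p) ℝ) : ℝ :=
  ⨆ i, ⨆ j, |M i j|

/-- Entrywise ℓ₁ norm `‖M‖₁`. -/
def l1Norm (M : Matrix (Fin p) (Fin p) ℝ) : ℝ :=
  ∑ i, ∑ j, |M i j|

/-- The matrix of the orthogonal projection of ℝ^p onto the column space of `M`. -/
def colProj (M : Matrix (Fin p) (Fin p) ℝ) : Matrix (Fin p) (Fin p) ℝ :=
  LinearMap.toMatrix (EuclideanSpace.basisFun (Fin p) ℝ).toBasis
    (EuclideanSpace.basisFun (Fin p) ℝ).toBasis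
    ((LinearMap.range (Matrix.toEuclideanLin M)).subtype ∘ₗ
      (LinearMap.range (Matrix.toEuclideanLin M)).orthogonalProjectionOnto.toLinearMap)

/-- Singular values of a matrix, as square roots of eigenvalues of `Mᴴ M`. -/
def singVals (M : Matrix (Fin p) (Fin p) ℝ) (i : Fin p) : ℝ :=
  Real.sqrt ((Matrix.posSemidef_conjTranspose_mul_self M).1.eigenvalues i)

/-! ### Sparse tangent spaces -/

/-- Tangent space to the variety of sparse matrices at `M₀`. -/
def OmegaSet (M₀ : Matrix (Fin p) (Fin p) ℝ) : Set (Matrix (Fin p) (Fin p) ℝ) :=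
  {N | ∀ i j, M₀ i j = 0 → N i j = 0}

/-- Orthogonal projection onto `OmegaSet M₀`. -/
def projOmega (M₀ N : Matrix (Fin p) (Fin p) ℝ) : Matrix (Fin p) (Fin p) ℝ :=
  Matrix.of fun i j => if M₀ i j = 0 then 0 else N i j

/-- Orthogonal projection onto the orthogonal complement of `OmegaSet M₀`. -/
def projOmegaPerp (M₀ N : Matrix (Fin p) (Fin p) ℝ) : Matrix (Fin p) (Fin p) ℝ :=
  Matrix.of fun i j => if M₀ i j = 0 then N i j else 0

/-- `μ(Ω(M₀))`: max spectral norm over the `‖·‖_∞`-unit ball of `Ω(M₀)`. -/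
def muOmega (M₀ : Matrix (Fin p) (Fin p) ℝ) : ℝ :=
  ⨆ N : {N : Matrix (Fin p) (Fin p) ℝ // N ∈ OmegaSet M₀ ∧ maxNorm N ≤ 1}, specNorm N.1

/-! ### Low-rank tangent spaces (symmetric version) -/

/-- `𝒫_{T(M)}` for symmetric `M`: `N ↦ P N + N P − P N P` with `P` the column-space projector. -/
def projTsym (M N : Matrix (Fin p) (Fin p) ℝ) : Matrix (Fin p) (Fin p) ℝ :=
  colProj M * N + N * colProj M - colProj M * N * colProj M

/-- `𝒫_{T(M)^⊥}` for symmetric `M`: `N ↦ (I−P) N (I−P)`. -/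
def projTsymPerp (M N : Matrix (Fin p) (Fin p) ℝ) : Matrix (Fin p) (Fin p) ℝ :=
  (1 - colProj M) * N * (1 - colProj M)

/-- Tangent space to the variety of symmetric low-rank matrices at symmetric `M`. -/
def TsetSym (M : Matrix (Fin p) (Fin p) ℝ) : Set (Matrix (Fin p) (Fin p) ℝ) :=
  {N | N.IsHermitian ∧ projTsymPerp M N = 0}

/-- `ξ(T(M))` (symmetric version). -/
def xiT (M : Matrix (Fin p) (Fin p) ℝ) : ℝ :=
  ⨆ N : {N : Matrix (Fin p) (Fin p) ℝ // N ∈ TsetSym M ∧ specNorm N ≤ 1}, maxNorm N.1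

/-- `ρ(T(M₁), T(M₂))` (symmetric version). -/
def rhoSym (M₁ M₂ : Matrix (Fin p) (Fin p) ℝ) : ℝ :=
  ⨆ N : {N : Matrix (Fin p) (Fin p) ℝ // specNorm N ≤ 1},
    specNorm (projTsym M₁ N.1 - projTsym M₂ N.1)

/-! ### Low-rank tangent spaces (general version) -/

/-- `𝒫_{T(M)}` for general `M`: `N ↦ P_U N + N P_V − P_U N P_V`. -/
def projTgen (M N : Matrix (Fin p) (Fin p) ℝ) : Matrix (Fin p) (Fin p) ℝ :=
  colProj M * N + N * colProj Mᵀ - colProj M * N * colProj Mᵀ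

/-- `𝒫_{T(M)^⊥}` for general `M`. -/
def projTgenPerp (M N : Matrix (Fin p) (Fin p) ℝ) : Matrix (Fin p) (Fin p) ℝ :=
  (1 - colProj M) * N * (1 - colProj Mᵀ)

/-- Tangent space to the variety of low-rank matrices at a general matrix `M`. -/
def TsetGen (M : Matrix (Fin p) (Fin p) ℝ) : Set (Matrix (Fin p) (Fin p) ℝ) :=
  {N | projTgenPerp M N = 0}

/-- `ξ(T(M))` (general version). -/
def xiGen (M : Matrix (Fin p) (Fin p) ℝ) : ℝ :=
  ⨆ N : {N : Matrix (Fin p) (Fin p) ℝ // N ∈ TsetGen M ∧ specNorm N ≤ 1}, maxNorm N.1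

/-- Euclidean norm of the `i`-th column of `P`, i.e. `‖P e_i‖`. -/
def colEucNorm (P : Matrix (Fin p) (Fin p) ℝ) (i : Fin p) : ℝ :=
  Real.sqrt (∑ j, (P j i) ^ 2)

/-- Incoherence `inc(M)` of the row/column spaces of `M`. -/
def inc (M : Matrix (Fin p) (Fin p) ℝ) : ℝ :=
  max (⨆ i, colEucNorm (colProj M) i) (⨆ i, colEucNorm (colProj Mᵀ) i)

/-! ### Orthogonal projections onto arbitrary subspaces of matrices -/

/-- Matrices as vectors in the Euclidean space of entries (trace inner product). -/
def toELin : Matrix (Fin p) (Fin p) ℝ →ₗ[ℝ] EuclideanSpace ℝ (Fin p × Fin p) where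
  toFun M := WithLp.toLp 2 fun q => M q.1 q.2
  map_add' _ _ := rfl
  map_smul' _ _ := rfl

/-- Orthogonal projection (trace inner product) onto a subspace of matrices. -/
def matProj (T : Submodule ℝ (Matrix (Fin p) (Fin p) ℝ)) (N : Matrix (Fin p) (Fin p) ℝ) :
    Matrix (Fin p) (Fin p) ℝ :=
  Matrix.of fun i j => ((T.map toELin).orthogonalProjectionOnto (toELin N) : EuclideanSpace ℝ (Fin p × Fin p)) (i, j)

/-- `ρ(T₁,T₂)` for arbitrary subspaces of matrices. -/
def rhoSub (T₁ T₂ : Submodule ℝ (Matrix (Fin p) (Fin p) ℝ)) : ℝ :=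
  ⨆ N : {N : Matrix (Fin p) (Fin p) ℝ // specNorm N ≤ 1},
    specNorm (matProj T₁ N.1 - matProj T₂ N.1)

/-- `ξ(T)` for an arbitrary subspace of matrices. -/
def xiSub (T : Submodule ℝ (Matrix (Fin p) (Fin p) ℝ)) : ℝ :=
  ⨆ N : {N : Matrix (Fin p) (Fin p) ℝ // N ∈ T ∧ specNorm N ≤ 1}, maxNorm N.1

/-! ### The dual norm g_γ -/

/-- `g_γ(S,L) = max(‖S‖_∞/γ, ‖L‖₂)`. -/
def gNorm (γ : ℝ) (S L : Matrix (Fin p) (Fin p) ℝ) : ℝ :=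
  max (maxNorm S / γ) (specNorm L)

/-- `g_γ(𝒜†(M)) = max(‖M‖_∞/γ, ‖M‖₂)`. -/
def gA (γ : ℝ) (M : Matrix (Fin p) (Fin p) ℝ) : ℝ :=
  max (maxNorm M / γ) (specNorm M)

/-! ### Latent-variable Fisher information setup -/

/-- `S* = K*_O`. -/
def Sstar (K : Matrix (Fin p ⊕ Fin h) (Fin p ⊕ Fin h) ℝ) : Matrix (Fin p) (Fin p) ℝ :=
  K.toBlocks₁₁

/-- `L* = K*_{O,H} (K*_H)⁻¹ K*_{H,O}`. -/
def Lstar (K : Matrix (Fin p ⊕ Fin h) (Fin p ⊕ Fin h) ℝ) : Matrix (Fin p) (Fin p) ℝ :=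
  K.toBlocks₁₂ * (K.toBlocks₂₂)⁻¹ * K.toBlocks₂₁

/-- `K̃*_O = S* − L*` (Schur complement). -/
def KtildeO (K : Matrix (Fin p ⊕ Fin h) (Fin p ⊕ Fin h) ℝ) : Matrix (Fin p) (Fin p) ℝ :=
  Sstar K - Lstar K

/-- `Σ*_O = (K̃*_O)⁻¹`. -/
def SigmaO (K : Matrix (Fin p ⊕ Fin h) (Fin p ⊕ Fin h) ℝ) : Matrix (Fin p) (Fin p) ℝ :=
  (KtildeO K)⁻¹

/-- `ψ = ‖Σ*_O‖₂`. -/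
def psi (K : Matrix (Fin p ⊕ Fin h) (Fin p ⊕ Fin h) ℝ) : ℝ :=
  specNorm (SigmaO K)

/-- Fisher information operator `ℐ*(M) = Σ*_O M Σ*_O`. -/
def Istar (K : Matrix (Fin p ⊕ Fin h) (Fin p ⊕ Fin h) ℝ) (M : Matrix (Fin p) (Fin p) ℝ) :
    Matrix (Fin p) (Fin p) ℝ :=
  SigmaO K * M * SigmaO K

/-- A nearby tangent space: `T' = T(M')` for a symmetric `M'` with the same rank as `Lst`
and `ρ(T',T(Lst)) ≤ ξ(T(Lst))/2`. -/
def Nearby (Lst M' : Matrix (Fin p) (Fin p) ℝ) : Prop :=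
  M'.IsHermitian ∧ M'.rank = Lst.rank ∧ rhoSym M' Lst ≤ xiT Lst / 2

/-- `α_Ω`. -/
def alphaOmega (K : Matrix (Fin p ⊕ Fin h) (Fin p ⊕ Fin h) ℝ) : ℝ :=
  ⨅ M : {M : Matrix (Fin p) (Fin p) ℝ // M ∈ OmegaSet (Sstar K) ∧ maxNorm M = 1},
    maxNorm (projOmega (Sstar K) (Istar K (projOmega (Sstar K) M.1)))

/-- `δ_Ω`. -/
def deltaOmega (K : Matrix (Fin p ⊕ Fin h) (Fin p ⊕ Fin h) ℝ) : ℝ :=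
  ⨆ M : {M : Matrix (Fin p) (Fin p) ℝ // M ∈ OmegaSet (Sstar K) ∧ maxNorm M = 1},
    maxNorm (projOmegaPerp (Sstar K) (Istar K (projOmega (Sstar K) M.1)))

/-- `β_Ω`. -/
def betaOmega (K : Matrix (Fin p ⊕ Fin h) (Fin p ⊕ Fin h) ℝ) : ℝ :=
  ⨆ M : {M : Matrix (Fin p) (Fin p) ℝ // M ∈ OmegaSet (Sstar K) ∧ specNorm M = 1},
    specNorm (Istar K M.1)

/-- `α_T`. -/
def alphaTC (K : Matrix (Fin p ⊕ Fin h) (Fin p ⊕ Fin h) ℝ) : ℝ :=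
  ⨅ x : {x : Matrix (Fin p) (Fin p) ℝ × Matrix (Fin p) (Fin p) ℝ //
      Nearby (Lstar K) x.1 ∧ x.2 ∈ TsetSym x.1 ∧ specNorm x.2 = 1},
    specNorm (projTsym x.1.1 (Istar K (projTsym x.1.1 x.1.2)))

/-- `δ_T`. -/
def deltaTC (K : Matrix (Fin p ⊕ Fin h) (Fin p ⊕ Fin h) ℝ) : ℝ :=
  ⨆ x : {x : Matrix (Fin p) (Fin p) ℝ × Matrix (Fin p) (Fin p) ℝ //
      Nearby (Lstar K) x.1 ∧ x.2 ∈ TsetSym x.1 ∧ specNorm x.2 = 1},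
    specNorm (projTsymPerp x.1.1 (Istar K (projTsym x.1.1 x.1.2)))

/-- `β_T`. -/
def betaTC (K : Matrix (Fin p ⊕ Fin h) (Fin p ⊕ Fin h) ℝ) : ℝ :=
  ⨆ x : {x : Matrix (Fin p) (Fin p) ℝ × Matrix (Fin p) (Fin p) ℝ //
      Nearby (Lstar K) x.1 ∧ x.2 ∈ TsetSym x.1 ∧ maxNorm x.2 = 1},
    maxNorm (Istar K x.1.2)

/-- `α = min(α_Ω, α_T)`. -/
def alphaC (K : Matrix (Fin p ⊕ Fin h) (Fin p ⊕ Fin h) ℝ) : ℝ :=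
  min (alphaOmega K) (alphaTC K)

/-- `δ = max(δ_Ω, δ_T)`. -/
def deltaC (K : Matrix (Fin p ⊕ Fin h) (Fin p ⊕ Fin h) ℝ) : ℝ :=
  max (deltaOmega K) (deltaTC K)

/-- `β = max(β_Ω, β_T)`. -/
def betaC (K : Matrix (Fin p ⊕ Fin h) (Fin p ⊕ Fin h) ℝ) : ℝ :=
  max (betaOmega K) (betaTC K)

/-! ### Probability: iid Gaussian samples and sample covariance -/

/-- The positive semidefinite square root of a positive semidefinite matrix, spelled out as in
the older Mathlib's `Matrix.PosSemidef.sqrt`. -/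
def psdSqrt {n : ℕ} {S : Matrix (Fin n) (Fin n) ℝ} (hS : S.PosSemidef) : Matrix (Fin n) (Fin n) ℝ :=
  hS.1.eigenvectorUnitary.1 * diagonal ((↑) ∘ Real.sqrt ∘ hS.1.eigenvalues) *
    (star hS.1.eigenvectorUnitary : Matrix (Fin n) (Fin n) ℝ)

/-- The joint law of `n` i.i.d. samples from `N(0, S)` on `ℝ^p`, realized by pushing forward
i.i.d. standard Gaussians through the positive-semidefinite square root of `S`. -/
def iidGaussian (n p : ℕ) (S : Matrix (Fin p) (Fin p) ℝ) : Measure (Fin n → Fin p → ℝ) :=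
  if hS : S.PosSemidef then
    (Measure.pi fun _ : Fin n => Measure.pi fun _ : Fin p =>
        ProbabilityTheory.gaussianReal 0 1).map
      (fun Z => fun i => (psdSqrt hS).mulVec (Z i))
  else 0

/-- Sample covariance matrix of samples `X 1, …, X n`. -/
def sampleCov {p n : ℕ} (X : Fin n → Fin p → ℝ) : Matrix (Fin p) (Fin p) ℝ :=
  (n : ℝ)⁻¹ • ∑ i, Matrix.vecMulVec (X i) (X i)

/-! ### Optimization programs -/

/-- Nuclear norm `‖M‖_*` (sum of singular values). -/
def nuclearNorm (M : Matrix (Fin p) (Fin p) ℝ) : ℝ :=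
  (psdSqrt (Matrix.posSemidef_conjTranspose_mul_self M)).trace

/-- Objective of the program (sdp1): `tr((S−L)Σ) − log det(S−L) + λ(γ‖S‖₁ + tr(L))`. -/
def objSDP1 (Sig : Matrix (Fin p) (Fin p) ℝ) (lam gam : ℝ)
    (S L : Matrix (Fin p) (Fin p) ℝ) : ℝ :=
  ((S - L) * Sig).trace - Real.log (S - L).det + lam * (gam * l1Norm S + L.trace)

/-- Feasibility for (sdp1): symmetric `S, L`, `S − L ≻ 0`, `L ⪰ 0`. -/
def FeasSDP1 (S L : Matrix (Fin p) (Fin p) ℝ) : Prop :=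
  S.IsHermitian ∧ L.IsHermitian ∧ (S - L).PosDef ∧ L.PosSemidef

/-- `(S,L)` is an optimum of the program (sdp1). -/
def IsOptSDP1 (Sig : Matrix (Fin p) (Fin p) ℝ) (lam gam : ℝ)
    (S L : Matrix (Fin p) (Fin p) ℝ) : Prop :=
  FeasSDP1 S L ∧ ∀ S' L', FeasSDP1 S' L' →
    objSDP1 Sig lam gam S L ≤ objSDP1 Sig lam gam S' L'

/-- Objective with the nuclear norm: `tr((S−L)Σ) − log det(S−L) + λ(γ‖S‖₁ + ‖L‖_*)`. -/
def objNuc (Sig : Matrix (Fin p) (Fin p) ℝ) (lam gam : ℝ)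
    (S L : Matrix (Fin p) (Fin p) ℝ) : ℝ :=
  ((S - L) * Sig).trace - Real.log (S - L).det + lam * (gam * l1Norm S + nuclearNorm L)

/-- Feasibility for the tangent-space constrained program: symmetric, `S ∈ Ω(Sst)`,
`L ∈ T(M')`, `S − L ≻ 0`. -/
def FeasTS (Sst M' : Matrix (Fin p) (Fin p) ℝ) (S L : Matrix (Fin p) (Fin p) ℝ) : Prop :=
  S.IsHermitian ∧ S ∈ OmegaSet Sst ∧ L ∈ TsetSym M' ∧ (S - L).PosDef

/-- Optimality for the tangent-space constrained program. -/
def IsOptTS (Sst M' Sig : Matrix (Fin p) (Fin p) ℝ) (lam gam : ℝ)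
    (S L : Matrix (Fin p) (Fin p) ℝ) : Prop :=
  FeasTS Sst M' S L ∧ ∀ S' L', FeasTS Sst M' S' L' →
    objNuc Sig lam gam S L ≤ objNuc Sig lam gam S' L'

/-- Feasibility for the unconstrained nuclear-norm program: symmetric, `S − L ≻ 0`. -/
def FeasSy (S L : Matrix (Fin p) (Fin p) ℝ) : Prop :=
  S.IsHermitian ∧ L.IsHermitian ∧ (S - L).PosDef

/-- Optimality for the unconstrained nuclear-norm program. -/
def IsOptSy (Sig : Matrix (Fin p) (Fin p) ℝ) (lam gam : ℝ)
    (S L : Matrix (Fin p) (Fin p) ℝ) : Prop :=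
  FeasSy S L ∧ ∀ S' L', FeasSy S' L' →
    objNuc Sig lam gam S L ≤ objNuc Sig lam gam S' L'

/-! ### Spectral projectors and inertia -/

/-- Orthogonal projection onto the direct sum of the eigenspaces of a symmetric matrix `A`
corresponding to eigenvalues of magnitude less than `η`. -/
def spectralProjLT (A : Matrix (Fin p) (Fin p) ℝ) (η : ℝ) : Matrix (Fin p) (Fin p) ℝ :=
  if hA : A.IsHermitian then
    ∑ i ∈ Finset.univ.filter (fun i => |hA.eigenvalues i| < η),
      Matrix.vecMulVec (fun j => hA.eigenvectorBasis i j) (fun j => hA.eigenvectorBasis i j)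
  else 0

/-- `t` is an eigenvalue of `A`. -/
def hasEigval (A : Matrix (Fin p) (Fin p) ℝ) (t : ℝ) : Prop :=
  ∃ v : Fin p → ℝ, v ≠ 0 ∧ A.mulVec v = t • v

/-- Inertia (numbers of positive, negative, and zero eigenvalues) of a symmetric matrix. -/
def inertia (M : Matrix (Fin p) (Fin p) ℝ) : ℕ × ℕ × ℕ :=
  if hM : M.IsHermitian then
    ((Finset.univ.filter fun i => 0 < hM.eigenvalues i).card,
     (Finset.univ.filter fun i => hM.eigenvalues i < 0).card,
     (Finset.univ.filter fun i => hM.eigenvalues i = 0).card)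
  else (0, 0, 0)

end LVGGM

section SProof
namespace SProof

open scoped RealInnerProductSpace


variable {p : ℕ}

abbrev Usp (A : Matrix (Fin p) (Fin p) ℝ) : Submodule ℝ (EuclideanSpace ℝ (Fin p)) :=
  LinearMap.range (Matrix.toEuclideanLin A)

def pc (A : Matrix (Fin p) (Fin p) ℝ) :
    EuclideanSpace ℝ (Fin p) →L[ℝ] EuclideanSpace ℝ (Fin p) :=
  (Usp A).subtypeL ∘L (Usp A).orthogonalProjectionOnto


lemma toEuclideanCLM_colProj (A : Matrix (Fin p) (Fin p) ℝ) :
    Matrix.toEuclideanCLM (𝕜 := ℝ) (LVGGM.colProj A) = pc A := by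
  apply ContinuousLinearMap.coe_injective
  rw [Matrix.coe_toEuclideanCLM_eq_toEuclideanLin, Matrix.toEuclideanLin_eq_toLin_orthonormal]
  unfold LVGGM.colProj
  rw [Matrix.toLin_toMatrix]
  rfl

lemma clm_apply (A : Matrix (Fin p) (Fin p) ℝ) (x : EuclideanSpace ℝ (Fin p)) :
    Matrix.toEuclideanCLM (𝕜 := ℝ) A x = Matrix.toEuclideanLin A x := by
  rw [← Matrix.coe_toEuclideanCLM_eq_toEuclideanLin]; rfl

lemma pc_apply (A : Matrix (Fin p) (Fin p) ℝ) (x : EuclideanSpace ℝ (Fin p)) :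
    pc A x = ((Usp A).orthogonalProjectionOnto x : EuclideanSpace ℝ (Fin p)) := rfl

lemma pc_mem (A : Matrix (Fin p) (Fin p) ℝ) (x : EuclideanSpace ℝ (Fin p)) :
    pc A x ∈ Usp A := by
  rw [pc_apply]; exact Submodule.coe_mem _

lemma pc_eq_self {A : Matrix (Fin p) (Fin p) ℝ} {x : EuclideanSpace ℝ (Fin p)}
    (h : x ∈ Usp A) : pc A x = x := by
  rw [pc_apply]
  exact congrArg Subtype.val (Submodule.orthogonalProjectionOnto_mem_subspace_eq_self (K := Usp A) ⟨x, h⟩)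

lemma inner_sub_pc (A : Matrix (Fin p) (Fin p) ℝ) (x : EuclideanSpace ℝ (Fin p))
    {u : EuclideanSpace ℝ (Fin p)} (hu : u ∈ Usp A) : ⟪x - pc A x, u⟫ = 0 := by
  have h := Submodule.sub_starProjection_mem_orthogonal (K := Usp A) x
  rw [Submodule.mem_orthogonal] at h
  rw [real_inner_comm]
  exact h u hu

lemma pc_inner (A : Matrix (Fin p) (Fin p) ℝ) (x y : EuclideanSpace ℝ (Fin p)) :
    ⟪pc A x, y⟫ = ⟪x, pc A y⟫ :=
  Submodule.inner_starProjection_left_eq_right (K := Usp A) x y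

lemma pc_pythagoras (A : Matrix (Fin p) (Fin p) ℝ) (x : EuclideanSpace ℝ (Fin p)) :
    ‖x‖ ^ 2 = ‖pc A x‖ ^ 2 + ‖x - pc A x‖ ^ 2 := by
  have h : ⟪pc A x, x - pc A x⟫ = 0 := by
    rw [real_inner_comm]; exact inner_sub_pc A x (pc_mem A x)
  have hx : x = pc A x + (x - pc A x) := by abel
  calc ‖x‖ ^ 2 = ‖pc A x + (x - pc A x)‖ ^ 2 := by rw [← hx]
    _ = ‖pc A x‖ ^ 2 + 2 * ⟪pc A x, x - pc A x⟫ + ‖x - pc A x‖ ^ 2 := norm_add_sq_real _ _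
    _ = ‖pc A x‖ ^ 2 + ‖x - pc A x‖ ^ 2 := by rw [h]; ring

lemma sq_le_imp {a b : ℝ} (ha : 0 ≤ a) (hb : 0 ≤ b) (h : a ^ 2 ≤ b ^ 2) : a ≤ b := by nlinarith

lemma norm_pc_le (A : Matrix (Fin p) (Fin p) ℝ) (x : EuclideanSpace ℝ (Fin p)) :
    ‖pc A x‖ ≤ ‖x‖ := by
  have := pc_pythagoras A x
  exact sq_le_imp (norm_nonneg _) (norm_nonneg _) (by nlinarith [sq_nonneg ‖x - pc A x‖])

lemma norm_sub_pc_le (A : Matrix (Fin p) (Fin p) ℝ) (x : EuclideanSpace ℝ (Fin p)) :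
    ‖x - pc A x‖ ≤ ‖x‖ := by
  have := pc_pythagoras A x
  exact sq_le_imp (norm_nonneg _) (norm_nonneg _) (by nlinarith [sq_nonneg ‖pc A x‖])

lemma clm_sa {A : Matrix (Fin p) (Fin p) ℝ} (hA : A.IsHermitian)
    (x y : EuclideanSpace ℝ (Fin p)) :
    ⟪Matrix.toEuclideanCLM (𝕜 := ℝ) A x, y⟫ = ⟪x, Matrix.toEuclideanCLM (𝕜 := ℝ) A y⟫ := by
  have hs : star (Matrix.toEuclideanCLM (𝕜 := ℝ) A) = Matrix.toEuclideanCLM (𝕜 := ℝ) A := by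
    rw [← map_star, show star A = A from hA]
  have := ContinuousLinearMap.adjoint_inner_right
    (𝕜 := ℝ) (Matrix.toEuclideanCLM (𝕜 := ℝ) A) x y
  rw [← ContinuousLinearMap.star_eq_adjoint, hs] at this
  exact this.symm


lemma clm_eigen {B : Matrix (Fin p) (Fin p) ℝ} (hB : B.IsHermitian) (i : Fin p) :
    Matrix.toEuclideanCLM (𝕜 := ℝ) B (hB.eigenvectorBasis i) =
      hB.eigenvalues i • hB.eigenvectorBasis i := by
  rw [clm_apply, Matrix.toEuclideanLin_apply]
  have h := hB.mulVec_eigenvectorBasis i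
  exact congrArg (WithLp.equiv 2 (Fin p → ℝ)).symm h

lemma norm_clm_sq (M : Matrix (Fin p) (Fin p) ℝ) (z : EuclideanSpace ℝ (Fin p)) :
    ‖Matrix.toEuclideanCLM (𝕜 := ℝ) M z‖ ^ 2 =
      ⟪z, Matrix.toEuclideanCLM (𝕜 := ℝ) (Mᴴ * M) z⟫ := by
  rw [_root_.map_mul]
  have : Matrix.toEuclideanCLM (𝕜 := ℝ) Mᴴ =
      ContinuousLinearMap.adjoint (Matrix.toEuclideanCLM (𝕜 := ℝ) M) := by
    rw [← ContinuousLinearMap.star_eq_adjoint, ← map_star]; rfl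
  rw [this, ContinuousLinearMap.mul_apply, ContinuousLinearMap.adjoint_inner_right,
    real_inner_self_eq_norm_sq]

lemma sigma_lower {M : Matrix (Fin p) (Fin p) ℝ} (hM : M.IsHermitian) {σ : ℝ}
    (hσpos : 0 < σ) (hσmin : ∀ i, LVGGM.singVals M i = 0 ∨ σ ≤ LVGGM.singVals M i) :
    ∀ z ∈ Usp M, σ * ‖z‖ ≤ ‖Matrix.toEuclideanCLM (𝕜 := ℝ) M z‖ := by
  intro z hz
  set B := Mᴴ * M with hBdef
  have hB : B.IsHermitian := (Matrix.posSemidef_conjTranspose_mul_self M).1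
  set lam := hB.eigenvalues with hlam
  set v := hB.eigenvectorBasis with hv
  have hlow : ∀ i, lam i = 0 ∨ σ ^ 2 ≤ lam i := by
    intro i
    have hnn : 0 ≤ lam i := (Matrix.posSemidef_conjTranspose_mul_self M).eigenvalues_nonneg i
    rcases hσmin i with h | h
    · left
      have : Real.sqrt (lam i) = 0 := h
      nlinarith [Real.sq_sqrt hnn, Real.sqrt_nonneg (lam i)]
    · right
      have : σ ≤ Real.sqrt (lam i) := h
      nlinarith [Real.sq_sqrt hnn, Real.sqrt_nonneg (lam i)]
  obtain ⟨w, hw⟩ := hz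
  have hker : ∀ i, lam i = 0 → ⟪v i, z⟫ = 0 := by
    intro i h0
    have hTv : Matrix.toEuclideanCLM (𝕜 := ℝ) M (v i) = 0 := by
      have h1 : ‖Matrix.toEuclideanCLM (𝕜 := ℝ) M (v i)‖ ^ 2 = 0 := by
        rw [norm_clm_sq, clm_eigen hB i, inner_smul_right, show hB.eigenvalues i = (0:ℝ) from h0]; ring
      have := sq_eq_zero_iff.mp h1
      simpa using this
    have hzw : z = Matrix.toEuclideanCLM (𝕜 := ℝ) M w := by rw [clm_apply, hw]
    rw [hzw, real_inner_comm, clm_sa hM, real_inner_comm, hTv, inner_zero_left]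
  have hBz : ∀ i, ⟪v i, Matrix.toEuclideanCLM (𝕜 := ℝ) B z⟫ = lam i * ⟪v i, z⟫ := by
    intro i
    rw [real_inner_comm, clm_sa hB, clm_eigen hB i, inner_smul_right, real_inner_comm]
  have hsum : ⟪z, Matrix.toEuclideanCLM (𝕜 := ℝ) B z⟫ = ∑ i, lam i * ⟪v i, z⟫ ^ 2 := by
    rw [← OrthonormalBasis.sum_inner_mul_inner v z (Matrix.toEuclideanCLM (𝕜 := ℝ) B z)]
    apply Finset.sum_congr rfl
    intro i _
    rw [hBz i, real_inner_comm z (v i)]; ring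
  have hnorm : ‖z‖ ^ 2 = ∑ i, ⟪v i, z⟫ ^ 2 := by
    rw [← real_inner_self_eq_norm_sq, ← OrthonormalBasis.sum_inner_mul_inner v z z]
    apply Finset.sum_congr rfl
    intro i _
    rw [real_inner_comm z (v i)]; ring
  have key : σ ^ 2 * ‖z‖ ^ 2 ≤ ‖Matrix.toEuclideanCLM (𝕜 := ℝ) M z‖ ^ 2 := by
    rw [norm_clm_sq, ← hBdef, hsum, hnorm, Finset.mul_sum]
    apply Finset.sum_le_sum
    intro i _
    rcases hlow i with h | h
    · rw [hker i h, h]; ring_nf; exact le_refl 0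
    · nlinarith [sq_nonneg (⟪v i, z⟫ : ℝ)]
  exact sq_le_imp (a := σ * ‖z‖) (b := ‖Matrix.toEuclideanCLM (𝕜 := ℝ) M z‖)
    (mul_nonneg hσpos.le (norm_nonneg _)) (norm_nonneg _) (by nlinarith [key])

lemma finrank_Usp (A : Matrix (Fin p) (Fin p) ℝ) :
    Module.finrank ℝ (Usp A) = A.rank := by
  rw [Matrix.rank_eq_finrank_range_toLin A (EuclideanSpace.basisFun (Fin p) ℝ).toBasis
      (EuclideanSpace.basisFun (Fin p) ℝ).toBasis, ← Matrix.toEuclideanLin_eq_toLin_orthonormal]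

lemma exists_preimage {M : Matrix (Fin p) (Fin p) ℝ} (hM : M.IsHermitian) {σ : ℝ}
    (hσpos : 0 < σ) (hσmin : ∀ i, LVGGM.singVals M i = 0 ∨ σ ≤ LVGGM.singVals M i) :
    ∀ y ∈ Usp M, ∃ z ∈ Usp M,
      Matrix.toEuclideanCLM (𝕜 := ℝ) M z = y ∧ σ * ‖z‖ ≤ ‖y‖ := by
  have hmap : ∀ x ∈ Usp M, Matrix.toEuclideanLin M x ∈ Usp M :=
    fun x _ => LinearMap.mem_range_self _ x
  set F : Usp M →ₗ[ℝ] Usp M := (Matrix.toEuclideanLin M).restrict hmap with hF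
  have hinj : Function.Injective F := by
    rw [← LinearMap.ker_eq_bot, LinearMap.ker_eq_bot']
    intro x hx
    have hx0 : Matrix.toEuclideanLin M (x : EuclideanSpace ℝ (Fin p)) = 0 := by
      have := congrArg (Subtype.val) hx
      simpa [hF, LinearMap.restrict_apply] using this
    have hb := sigma_lower hM hσpos hσmin (x : EuclideanSpace ℝ (Fin p)) x.2
    rw [clm_apply, hx0, norm_zero] at hb
    have : ‖(x : EuclideanSpace ℝ (Fin p))‖ = 0 := by
      nlinarith [norm_nonneg (x : EuclideanSpace ℝ (Fin p))]
    ext1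
    simpa using norm_eq_zero.mp this
  have hsurj : Function.Surjective F := LinearMap.injective_iff_surjective.mp hinj
  intro y hy
  obtain ⟨x, hx⟩ := hsurj ⟨y, hy⟩
  refine ⟨(x : EuclideanSpace ℝ (Fin p)), x.2, ?_, ?_⟩
  · rw [clm_apply]
    have := congrArg (Subtype.val) hx
    simpa [hF, LinearMap.restrict_apply] using this
  · have heq : Matrix.toEuclideanCLM (𝕜 := ℝ) M (x : EuclideanSpace ℝ (Fin p)) = y := by
      rw [clm_apply]
      have := congrArg (Subtype.val) hx
      simpa [hF, LinearMap.restrict_apply] using this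
    have := sigma_lower hM hσpos hσmin (x : EuclideanSpace ℝ (Fin p)) x.2
    rwa [heq] at this

variable {M Δ : Matrix (Fin p) (Fin p) ℝ} {σ : ℝ}

/-- Davis–Kahan step: vectors in the range of `M` are nearly fixed by `pc (M+Δ)`. -/
lemma L1 (hM : M.IsHermitian) (hσpos : 0 < σ)
    (hσmin : ∀ i, LVGGM.singVals M i = 0 ∨ σ ≤ LVGGM.singVals M i) :
    ∀ y ∈ Usp M, ‖y - pc (M + Δ) y‖ ≤ (‖Matrix.toEuclideanCLM (𝕜 := ℝ) Δ‖ / σ) * ‖y‖ := by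
  intro y hy
  obtain ⟨z, hzU, hzT, hznorm⟩ := exists_preimage hM hσpos hσmin y hy
  set D := Matrix.toEuclideanCLM (𝕜 := ℝ) Δ with hD
  set T' := Matrix.toEuclideanCLM (𝕜 := ℝ) (M + Δ) with hT'
  have hT'z : T' z = y + D z := by
    rw [hT', map_add, ContinuousLinearMap.add_apply, hzT]
  have hT'mem : T' z ∈ Usp (M + Δ) := by
    rw [hT', clm_apply]; exact LinearMap.mem_range_self _ z
  have hkey : y - pc (M + Δ) y = pc (M + Δ) (D z) - D z := by
    have h1 : pc (M + Δ) (T' z) = T' z := pc_eq_self hT'mem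
    have h2 : pc (M + Δ) y = pc (M + Δ) (T' z) - pc (M + Δ) (D z) := by
      rw [← map_sub]; congr 1; rw [hT'z]; abel
    rw [h2, h1, hT'z]; abel
  rw [hkey]
  have h3 : ‖pc (M + Δ) (D z) - D z‖ ≤ ‖D z‖ := by
    rw [norm_sub_rev]; exact norm_sub_pc_le _ _
  have h4 : ‖D z‖ ≤ ‖D‖ * ‖z‖ := D.le_opNorm z
  rw [div_mul_eq_mul_div, le_div_iff₀ hσpos]
  nlinarith [norm_nonneg (D z), norm_nonneg z, norm_nonneg (pc (M + Δ) (D z) - D z),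
    mul_le_mul_of_nonneg_left hznorm (norm_nonneg D), norm_nonneg y, norm_nonneg (D : _)]

lemma scalar_sine {A X Pn c : ℝ} (hA : 0 < A) (hc : 0 ≤ c)
    (h1 : c * X ^ 2 ≤ A ^ 2) (h2 : A ^ 2 ≤ X * Pn) : c * A ^ 2 ≤ Pn ^ 2 := by
  have h4 : A ^ 2 * A ^ 2 ≤ (X * Pn) * (X * Pn) := mul_self_le_mul_self (sq_nonneg A) h2
  have h5 : c * X ^ 2 * Pn ^ 2 ≤ A ^ 2 * Pn ^ 2 := mul_le_mul_of_nonneg_right h1 (sq_nonneg Pn)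
  by_contra hcon
  push_neg at hcon
  nlinarith [mul_lt_mul_of_pos_right hcon (by positivity : (0:ℝ) < A ^ 2),
    mul_le_mul_of_nonneg_left h4 hc]

set_option maxHeartbeats 1000000 in
/-- Sine symmetry: vectors in the range of `M+Δ` are nearly fixed by `pc M`. -/
lemma L5 (hM : M.IsHermitian) (hσpos : 0 < σ)
    (hσmin : ∀ i, LVGGM.singVals M i = 0 ∨ σ ≤ LVGGM.singVals M i)
    (hrank : (M + Δ).rank = M.rank)
    (hsmall : ‖Matrix.toEuclideanCLM (𝕜 := ℝ) Δ‖ / σ ≤ 1 / 8) :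
    ∀ y ∈ Usp (M + Δ), ‖y - pc M y‖ ≤ (‖Matrix.toEuclideanCLM (𝕜 := ℝ) Δ‖ / σ) * ‖y‖ := by
  set b := ‖Matrix.toEuclideanCLM (𝕜 := ℝ) Δ‖ / σ with hb
  have hb0 : 0 ≤ b := div_nonneg (norm_nonneg _) hσpos.le
  have hb2 : b ^ 2 < 1 := by nlinarith
  have h1 := L1 (Δ := Δ) hM hσpos hσmin
  rw [← hb] at h1
  -- the restriction of `pc (M+Δ)` to `Usp M`, viewed into `Usp (M+Δ)`
  have hmap : ∀ x ∈ Usp M, pc (M + Δ) x ∈ Usp (M + Δ) := fun x _ => pc_mem _ x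
  have hG : ∃ G : Usp M →ₗ[ℝ] Usp (M + Δ),
      ∀ x : Usp M, (G x : EuclideanSpace ℝ (Fin p)) = pc (M + Δ) x :=
    ⟨((pc (M + Δ)).toLinearMap).restrict hmap, fun x => rfl⟩
  obtain ⟨G, hGdef⟩ := hG
  have hGinj : Function.Injective G := by
    rw [← LinearMap.ker_eq_bot, LinearMap.ker_eq_bot']
    intro x hx
    have hx0 : pc (M + Δ) (x : EuclideanSpace ℝ (Fin p)) = 0 := by
      rw [← hGdef, hx]; rfl
    have hb1 := h1 (x : EuclideanSpace ℝ (Fin p)) x.2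
    rw [hx0, sub_zero] at hb1
    have hxn : ‖(x : EuclideanSpace ℝ (Fin p))‖ = 0 := by
      nlinarith [norm_nonneg (x : EuclideanSpace ℝ (Fin p))]
    ext1
    simpa using norm_eq_zero.mp hxn
  have hdim : Module.finrank ℝ (Usp M) = Module.finrank ℝ (Usp (M + Δ)) := by
    rw [finrank_Usp, finrank_Usp, hrank]
  have hGsurj : Function.Surjective G :=
    (LinearMap.injective_iff_surjective_of_finrank_eq_finrank hdim).mp hGinj
  intro y hy
  obtain ⟨x, hx⟩ := hGsurj ⟨y, hy⟩
  have hxy : pc (M + Δ) (x : EuclideanSpace ℝ (Fin p)) = y := by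
    rw [← hGdef, hx]
  -- bound ‖x‖ in terms of ‖y‖
  have hxb : (1 - b ^ 2) * ‖(x : EuclideanSpace ℝ (Fin p))‖ ^ 2 ≤ ‖y‖ ^ 2 := by
    have hpy := pc_pythagoras (M + Δ) (x : EuclideanSpace ℝ (Fin p))
    have hb1 := h1 (x : EuclideanSpace ℝ (Fin p)) x.2
    rw [hxy] at hpy hb1
    nlinarith [norm_nonneg (x : EuclideanSpace ℝ (Fin p)),
      mul_self_le_mul_self (norm_nonneg ((x : EuclideanSpace ℝ (Fin p)) - y)) hb1,
      sq_nonneg ‖(x : EuclideanSpace ℝ (Fin p))‖]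
  -- ‖y‖² = ⟪x, pc M y⟫
  have hyP : ‖y‖ ^ 2 = ⟪(x : EuclideanSpace ℝ (Fin p)), pc M y⟫ := by
    calc ‖y‖ ^ 2 = ⟪pc (M + Δ) (x : EuclideanSpace ℝ (Fin p)), y⟫ := by
          rw [hxy]; exact (real_inner_self_eq_norm_sq y).symm
      _ = ⟪(x : EuclideanSpace ℝ (Fin p)), pc (M + Δ) y⟫ := pc_inner _ _ _
      _ = ⟪(x : EuclideanSpace ℝ (Fin p)), y⟫ := by rw [pc_eq_self hy]
      _ = ⟪pc M (x : EuclideanSpace ℝ (Fin p)), y⟫ := by rw [pc_eq_self x.2]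
      _ = ⟪(x : EuclideanSpace ℝ (Fin p)), pc M y⟫ := pc_inner _ _ _
  have hPyl : (1 - b ^ 2) * ‖y‖ ^ 2 ≤ ‖pc M y‖ ^ 2 := by
    rcases eq_or_lt_of_le (norm_nonneg y) with h0 | h0
    · rw [← h0]; nlinarith [sq_nonneg ‖pc M y‖]
    · have hcs : ‖y‖ ^ 2 ≤ ‖(x : EuclideanSpace ℝ (Fin p))‖ * ‖pc M y‖ := by
        rw [hyP]; exact real_inner_le_norm _ _
      exact scalar_sine h0 (by nlinarith) hxb hcs
  have hpy := pc_pythagoras M y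
  refine sq_le_imp (norm_nonneg _) (mul_nonneg hb0 (norm_nonneg _)) ?_
  nlinarith [norm_nonneg (y - pc M y)]

set_option maxHeartbeats 1000000 in
/-- The two projectors are close in operator norm, pointwise. -/
lemma L6 (hM : M.IsHermitian) (hσpos : 0 < σ)
    (hσmin : ∀ i, LVGGM.singVals M i = 0 ∨ σ ≤ LVGGM.singVals M i)
    (hrank : (M + Δ).rank = M.rank)
    (hsmall : ‖Matrix.toEuclideanCLM (𝕜 := ℝ) Δ‖ / σ ≤ 1 / 8) :
    ∀ w, ‖pc (M + Δ) w - pc M w‖ ≤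
      (‖Matrix.toEuclideanCLM (𝕜 := ℝ) Δ‖ / σ) * ‖w‖ := by
  set b := ‖Matrix.toEuclideanCLM (𝕜 := ℝ) Δ‖ / σ with hb
  have hb0 : 0 ≤ b := div_nonneg (norm_nonneg _) hσpos.le
  have h1 := L1 (Δ := Δ) hM hσpos hσmin
  have h5 := L5 hM hσpos hσmin hrank hsmall
  rw [← hb] at h1 h5
  intro w
  set u := w - pc (M + Δ) w with hu
  -- ‖pc M u‖ ≤ b ‖u‖
  have hPu : ‖pc M u‖ ≤ b * ‖u‖ := by
    have hP'u : pc (M + Δ) u = 0 := by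
      rw [hu, map_sub, pc_eq_self (pc_mem (M + Δ) w), sub_self]
    have hinner : ⟪u, pc (M + Δ) (pc M u)⟫ = 0 := by
      rw [← pc_inner, hP'u, inner_zero_left]
    have hsq : ‖pc M u‖ ^ 2 = ⟪u, pc M u⟫ := by
      rw [← real_inner_self_eq_norm_sq, pc_inner, pc_eq_self (pc_mem M u)]
    have hsplit : ⟪u, pc M u⟫ = ⟪u, pc M u - pc (M + Δ) (pc M u)⟫ := by
      rw [inner_sub_right, hinner]; ring
    have hcs : ⟪u, pc M u - pc (M + Δ) (pc M u)⟫ ≤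
        ‖u‖ * ‖pc M u - pc (M + Δ) (pc M u)‖ := real_inner_le_norm _ _
    have hL1 := h1 (pc M u) (pc_mem M u)
    rcases eq_or_lt_of_le (norm_nonneg (pc M u)) with h0 | h0
    · rw [← h0]; exact mul_nonneg hb0 (norm_nonneg u)
    · nlinarith [norm_nonneg u]
  have ha : ‖pc (M + Δ) w - pc M (pc (M + Δ) w)‖ ≤ b * ‖pc (M + Δ) w‖ :=
    h5 (pc (M + Δ) w) (pc_mem (M + Δ) w)
  have hdecomp : pc (M + Δ) w - pc M w =
      (pc (M + Δ) w - pc M (pc (M + Δ) w)) - pc M u := by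
    rw [hu, map_sub]; abel
  have horth : ⟪pc (M + Δ) w - pc M (pc (M + Δ) w), pc M u⟫ = 0 :=
    inner_sub_pc M (pc (M + Δ) w) (pc_mem M u)
  have hpyth : ‖pc (M + Δ) w - pc M w‖ ^ 2 =
      ‖pc (M + Δ) w - pc M (pc (M + Δ) w)‖ ^ 2 + ‖pc M u‖ ^ 2 := by
    rw [hdecomp, norm_sub_sq_real, horth]; ring
  have hw := pc_pythagoras (M + Δ) w
  refine sq_le_imp (norm_nonneg _) (mul_nonneg hb0 (norm_nonneg _)) ?_
  rw [hpyth]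
  nlinarith [norm_nonneg (pc (M + Δ) w), norm_nonneg u,
    mul_self_le_mul_self (norm_nonneg (pc M u)) hPu,
    mul_self_le_mul_self (norm_nonneg (pc (M + Δ) w - pc M (pc (M + Δ) w))) ha,
    sq_nonneg b]


set_option maxHeartbeats 1000000 in
lemma diff_bound (hM : M.IsHermitian) (hσpos : 0 < σ)
    (hσmin : ∀ i, LVGGM.singVals M i = 0 ∨ σ ≤ LVGGM.singVals M i)
    (hrank : (M + Δ).rank = M.rank)
    (hsmall : ‖Matrix.toEuclideanCLM (𝕜 := ℝ) Δ‖ / σ ≤ 1 / 8)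
    (N : Matrix (Fin p) (Fin p) ℝ) (hN : ‖Matrix.toEuclideanCLM (𝕜 := ℝ) N‖ ≤ 1) :
    ‖Matrix.toEuclideanCLM (𝕜 := ℝ) (LVGGM.projTsym (M + Δ) N - LVGGM.projTsym M N)‖ ≤
      2 / σ * ‖Matrix.toEuclideanCLM (𝕜 := ℝ) Δ‖ := by
  set b := ‖Matrix.toEuclideanCLM (𝕜 := ℝ) Δ‖ / σ with hb
  have hb0 : 0 ≤ b := div_nonneg (norm_nonneg _) hσpos.le
  have h6 := L6 hM hσpos hσmin hrank hsmall
  rw [← hb] at h6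
  set Nc := Matrix.toEuclideanCLM (𝕜 := ℝ) N with hNc
  have hφ : Matrix.toEuclideanCLM (𝕜 := ℝ) (LVGGM.projTsym (M + Δ) N - LVGGM.projTsym M N) =
      pc (M + Δ) * Nc + Nc * pc (M + Δ) - pc (M + Δ) * Nc * pc (M + Δ) -
        (pc M * Nc + Nc * pc M - pc M * Nc * pc M) := by
    simp only [LVGGM.projTsym, map_sub, map_add, _root_.map_mul, toEuclideanCLM_colProj, hNc]
  have hgoal : 2 / σ * ‖Matrix.toEuclideanCLM (𝕜 := ℝ) Δ‖ = 2 * b := by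
    rw [hb]; ring
  rw [hφ, hgoal]
  refine ContinuousLinearMap.opNorm_le_bound _ (by positivity) (fun v => ?_)
  have hid : (pc (M + Δ) * Nc + Nc * pc (M + Δ) - pc (M + Δ) * Nc * pc (M + Δ) -
        (pc M * Nc + Nc * pc M - pc M * Nc * pc M)) v =
      (pc (M + Δ) (Nc (v - pc M v)) - pc M (Nc (v - pc M v))) +
        (Nc (pc (M + Δ) v - pc M v) -
          pc (M + Δ) (Nc (pc (M + Δ) v - pc M v))) := by
    simp only [ContinuousLinearMap.sub_apply, ContinuousLinearMap.add_apply,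
      ContinuousLinearMap.mul_apply, map_sub]
    abel
  rw [hid]
  have hNle : ∀ x : EuclideanSpace ℝ (Fin p), ‖Nc x‖ ≤ ‖x‖ := by
    intro x
    calc ‖Nc x‖ ≤ ‖Nc‖ * ‖x‖ := Nc.le_opNorm x
      _ ≤ 1 * ‖x‖ := mul_le_mul_of_nonneg_right hN (norm_nonneg x)
      _ = ‖x‖ := one_mul _
  have t1 : ‖pc (M + Δ) (Nc (v - pc M v)) - pc M (Nc (v - pc M v))‖ ≤ b * ‖v‖ := by
    calc ‖pc (M + Δ) (Nc (v - pc M v)) - pc M (Nc (v - pc M v))‖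
        ≤ b * ‖Nc (v - pc M v)‖ := h6 _
      _ ≤ b * ‖v - pc M v‖ := mul_le_mul_of_nonneg_left (hNle _) hb0
      _ ≤ b * ‖v‖ := mul_le_mul_of_nonneg_left (norm_sub_pc_le M v) hb0
  have t2 : ‖Nc (pc (M + Δ) v - pc M v) -
      pc (M + Δ) (Nc (pc (M + Δ) v - pc M v))‖ ≤ b * ‖v‖ := by
    calc ‖Nc (pc (M + Δ) v - pc M v) - pc (M + Δ) (Nc (pc (M + Δ) v - pc M v))‖
        ≤ ‖Nc (pc (M + Δ) v - pc M v)‖ := norm_sub_pc_le _ _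
      _ ≤ ‖pc (M + Δ) v - pc M v‖ := hNle _
      _ ≤ b * ‖v‖ := h6 v
  calc ‖_ + _‖ ≤ _ + _ := norm_add_le _ _
    _ ≤ b * ‖v‖ + b * ‖v‖ := add_le_add t1 t2
    _ = 2 * b * ‖v‖ := by ring


end SProof
end SProof

open SProof in
/-- Proposition: twisting of tangent spaces under perturbation.
If `M` is symmetric of rank `r` with smallest nonzero singular value `σ`, `Δ` is symmetric with
`‖Δ‖₂ ≤ σ/8`, and `M+Δ` also has rank `r`, then `ρ(T(M+Δ), T(M)) ≤ (2/σ)‖Δ‖₂`. -/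
theorem statement_0 {p : ℕ} (r : ℕ) (σ : ℝ) (M Δ : Matrix (Fin p) (Fin p) ℝ)
    (hM : M.IsHermitian) (hΔ : Δ.IsHermitian)
    (hrM : M.rank = r) (hrMΔ : (M + Δ).rank = r)
    (hσpos : 0 < σ)
    (hσmin : ∀ i, LVGGM.singVals M i = 0 ∨ σ ≤ LVGGM.singVals M i)
    (hσex : ∃ i, LVGGM.singVals M i = σ)
    (hΔsmall : LVGGM.specNorm Δ ≤ σ / 8) :
    LVGGM.rhoSym (M + Δ) M ≤ (2 / σ) * LVGGM.specNorm Δ := by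
  have hrank : (M + Δ).rank = M.rank := hrMΔ.trans hrM.symm
  have hsmall : ‖Matrix.toEuclideanCLM (𝕜 := ℝ) Δ‖ / σ ≤ 1 / 8 := by
    rw [div_le_iff₀ hσpos]
    have hs : LVGGM.specNorm Δ = ‖Matrix.toEuclideanCLM (𝕜 := ℝ) Δ‖ := rfl
    linarith [hΔsmall]
  refine Real.iSup_le (fun N => ?_)
    (mul_nonneg (div_nonneg (by norm_num) hσpos.le) (norm_nonneg _))
  exact SProof.diff_bound hM hσpos hσmin hrank hsmall N.1 N.2
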